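/- Let (M,d) be an unbounded metric space containing an escaping geodesic ray (a curve γ : [0,∞) → M with d(γ(0), γ(t)) → ∞ as t → ∞), μ a Borel probability measure, and ρ : [0,∞) → [0,∞) non-decreasing and continuous with ρ(0)=0 and lim_{t→∞} ρ(t) = ∞. If F(m) = ∫ ρ(d(x,m)) dμ(x) is finite for every m ∈ M, then F is not a constant function. -/

import Mathlib

open MeasureTheory Set Filter

/-- Non-constancy of the objective (unbounded loss): if `M` contains an escaping ray
`γ : [0,∞) → M` with `d(γ(0), γ(t)) → ∞`, `ρ` is a non-decreasing continuous loss with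
`ρ(0) = 0` and `ρ(t) → ∞`, and `F(m) = ∫ ρ(d(x,m)) dμ(x)` is finite for every `m`, then
`F` is not constant. -/
theorem objective_not_constant_unbounded
    {M : Type*} [MetricSpace M] [MeasurableSpace M] [BorelSpace M]
    (μ : Measure M) [IsProbabilityMeasure μ]
    (γ : ℝ → M)
    (hγ : Tendsto (fun t => dist (γ 0) (γ t)) atTop atTop)
    (ρ : ℝ → ℝ)
    (hmono : MonotoneOn ρ (Ici 0))
    (hcont : ContinuousOn ρ (Ici 0))
    (hρ0 : ρ 0 = 0)
    (hρnonneg : ∀ t ∈ Ici (0:ℝ), 0 ≤ ρ t)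
    (htop : Tendsto ρ atTop atTop)
    (F : M → ℝ)
    (hF : ∀ m, F m = ∫ x, ρ (dist x m) ∂μ)
    (hint : ∀ m : M, Integrable (fun x => ρ (dist x m)) μ) :
    ¬ ∀ m m' : M, F m = F m' := by
  intro hconst
  set x0 := γ 0 with hx0
  -- find a ball around x0 of measure > 1/2
  have hUnion : ⋃ n : ℕ, Metric.closedBall x0 n = univ := by
    ext x
    simp only [mem_iUnion, Metric.mem_closedBall, mem_univ, iff_true]
    exact exists_nat_ge (dist x x0)
  have hmonoB : Monotone (fun n : ℕ => Metric.closedBall x0 n) := by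
    intro a b hab
    exact Metric.closedBall_subset_closedBall (by exact_mod_cast hab)
  have htendB : Tendsto (fun n : ℕ => μ (Metric.closedBall x0 n)) atTop
      (nhds (μ (⋃ n : ℕ, Metric.closedBall x0 n))) :=
    tendsto_measure_iUnion_atTop hmonoB
  rw [hUnion, measure_univ] at htendB
  have hev : ∀ᶠ n : ℕ in atTop, (1/2 : ENNReal) < μ (Metric.closedBall x0 n) :=
    htendB.eventually (eventually_gt_nhds (by norm_num))
  obtain ⟨n, hn⟩ := hev.exists
  set R : ℝ := (n : ℝ) with hR
  have hR0 : (0:ℝ) ≤ R := Nat.cast_nonneg n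
  set B := Metric.closedBall x0 R with hB
  set C := F x0 with hC
  have hC0 : 0 ≤ C := by
    rw [hC, hF]
    exact integral_nonneg fun x => hρnonneg _ dist_nonneg
  -- pick t far away
  have hsub : Tendsto (fun t => dist x0 (γ t) - R) atTop atTop :=
    tendsto_atTop_add_const_right atTop (-R) hγ
  have hρt : Tendsto (fun t => ρ (dist x0 (γ t) - R)) atTop atTop :=
    htop.comp hsub
  obtain ⟨t, ht1, ht2⟩ :=
    ((hρt.eventually_gt_atTop (2*C+1)).and (hγ.eventually_ge_atTop R)).exists
  set D := dist x0 (γ t) with hD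
  set c := ρ (D - R) with hc
  have hDR : 0 ≤ D - R := by linarith
  have hc0 : 0 ≤ c := hρnonneg _ hDR
  -- pointwise lower bound on B
  have hlow : ∀ x ∈ B, c ≤ ρ (dist x (γ t)) := by
    intro x hx
    have hxd : dist x x0 ≤ R := Metric.mem_closedBall.mp hx
    have h1 : D - R ≤ dist x (γ t) := by
      have := dist_triangle x0 x (γ t)
      have hsym : dist x0 x = dist x x0 := dist_comm _ _
      linarith [this, hsym ▸ hxd]
    exact hmono hDR (le_trans hDR h1) h1
  -- compare integrals
  have hg : Integrable (B.indicator fun _ => c) μ :=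
    (integrable_const c).indicator measurableSet_closedBall
  have hle : ∀ x, B.indicator (fun _ => c) x ≤ ρ (dist x (γ t)) := by
    intro x
    by_cases hx : x ∈ B
    · rw [indicator_of_mem hx]; exact hlow x hx
    · rw [indicator_of_notMem hx]; exact hρnonneg _ dist_nonneg
  have hInt1 : ∫ x, B.indicator (fun _ => c) x ∂μ ≤ ∫ x, ρ (dist x (γ t)) ∂μ :=
    integral_mono hg (hint (γ t)) hle
  have hInd : ∫ x, B.indicator (fun _ => c) x ∂μ = (μ B).toReal * c := by
    rw [integral_indicator_const c measurableSet_closedBall]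
    simp [smul_eq_mul]
    left; rfl
  have hμB : (1/2 : ℝ) ≤ (μ B).toReal := by
    have hfin : μ B ≠ ⊤ := measure_ne_top μ B
    have : (1/2 : ENNReal) ≤ μ B := le_of_lt hn
    have := ENNReal.toReal_mono hfin this
    simpa using this
  have hlb : (1/2 : ℝ) * c ≤ (μ B).toReal * c :=
    mul_le_mul_of_nonneg_right hμB hc0
  have hFt : F (γ t) = ∫ x, ρ (dist x (γ t)) ∂μ := hF _
  have : (1/2 : ℝ) * c ≤ F (γ t) := by
    rw [hFt]
    calc (1/2 : ℝ) * c ≤ (μ B).toReal * c := hlb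
      _ = ∫ x, B.indicator (fun _ => c) x ∂μ := hInd.symm
      _ ≤ _ := hInt1
  have hcontra : F (γ t) = C := hconst _ _
  rw [hcontra] at this
  nlinarith
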